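/- Let φ ∈ L²_loc(0,∞). The following are equivalent: (i) the operator Q_φ extends to a bounded operator on L²(0,∞); (ii) the operator Q_φ⁺ extends to a bounded operator on L²(0,∞); (iii) sup_{x>0} x·∫_x^∞ |φ(y)|² dy < ∞. -/

import Mathlib

open MeasureTheory Set Filter
open scoped ENNReal NNReal Topology

noncomputable section

def TestFun (f : ℝ → ℂ) : Prop :=
  (∃ C : ℝ, ∀ x, ‖f x‖ ≤ C) ∧ ∃ a b : ℝ, 0 < a ∧ ∀ x, x ∉ Set.Icc a b → f x = 0

def IsQ (φ : ℝ → ℂ) (s : Set ℝ)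
    (T : Lp ℂ 2 (volume.restrict s) →L[ℂ] Lp ℂ 2 (volume.restrict s)) : Prop :=
  ∀ (f : ℝ → ℂ) (hf : MemLp f 2 (volume.restrict s)), TestFun f →
    ⇑(T (MemLp.toLp f hf)) =ᵐ[volume.restrict s] fun x => ∫ y in s, φ (max x y) * f y

def IsQplus (φ : ℝ → ℂ)
    (T : Lp ℂ 2 (volume.restrict (Set.Ioi (0:ℝ))) →L[ℂ]
         Lp ℂ 2 (volume.restrict (Set.Ioi (0:ℝ)))) : Prop :=
  ∀ (f : ℝ → ℂ) (hf : MemLp f 2 (volume.restrict (Set.Ioi (0:ℝ)))), TestFun f →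
    ⇑(T (MemLp.toLp f hf)) =ᵐ[volume.restrict (Set.Ioi (0:ℝ))]
      fun x => φ x * ∫ y in Set.Ioc (0:ℝ) x, f y

def IsQminus (φ : ℝ → ℂ)
    (T : Lp ℂ 2 (volume.restrict (Set.Ioi (0:ℝ))) →L[ℂ]
         Lp ℂ 2 (volume.restrict (Set.Ioi (0:ℝ)))) : Prop :=
  ∀ (f : ℝ → ℂ) (hf : MemLp f 2 (volume.restrict (Set.Ioi (0:ℝ)))), TestFun f →
    ⇑(T (MemLp.toLp f hf)) =ᵐ[volume.restrict (Set.Ioi (0:ℝ))]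
      fun x => ∫ y in Set.Ioi x, φ y * f y

def sNum {E F : Type*} [NormedAddCommGroup E] [NormedSpace ℂ E]
    [NormedAddCommGroup F] [NormedSpace ℂ F] (T : E →L[ℂ] F) (n : ℕ) : ℝ :=
  sInf ((fun R : E →L[ℂ] F => ‖T - R‖) ''
    {R : E →L[ℂ] F | LinearMap.rank (R : E →ₗ[ℂ] F) ≤ (n : Cardinal)})

def schattenSum {E F : Type*} [NormedAddCommGroup E] [NormedSpace ℂ E]
    [NormedAddCommGroup F] [NormedSpace ℂ F] (p : ℝ) (T : E →L[ℂ] F) : ℝ≥0∞ :=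
  ∑' n : ℕ, ENNReal.ofReal (sNum T n) ^ p

def MemSchatten {E F : Type*} [NormedAddCommGroup E] [NormedSpace ℂ E]
    [NormedAddCommGroup F] [NormedSpace ℂ F] (p : ℝ) (T : E →L[ℂ] F) : Prop :=
  schattenSum p T < ⊤


namespace QPhi

lemma sq_eLpNorm_two {α} [MeasurableSpace α] (ν : Measure α) (f : α → ℂ) :
    eLpNorm f 2 ν ^ 2 = ∫⁻ x, (‖f x‖₊ : ℝ≥0∞) ^ 2 ∂ν := by
  rw [eLpNorm_eq_lintegral_rpow_enorm_toReal two_ne_zero ENNReal.ofNat_ne_top]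
  rw [ENNReal.toReal_ofNat]
  rw [← ENNReal.rpow_natCast _ 2, ← ENNReal.rpow_mul]
  norm_num
  rfl


lemma memℒp_two_iff' {α} [MeasurableSpace α] {ν : Measure α} {f : α → ℂ} :
    MemLp f 2 ν ↔ AEStronglyMeasurable f ν ∧ ∫⁻ x, (‖f x‖₊ : ℝ≥0∞) ^ 2 ∂ν < ⊤ := by
  constructor
  · rintro ⟨h1, h2⟩
    refine ⟨h1, ?_⟩
    rw [← sq_eLpNorm_two]
    exact ENNReal.pow_lt_top h2
  · rintro ⟨h1, h2⟩
    refine ⟨h1, ?_⟩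
    rw [← sq_eLpNorm_two] at h2
    by_contra h
    simp only [not_lt, top_le_iff] at h
    rw [h] at h2
    exact absurd h2 (by simp)

lemma lintegral_mul_sq_le {α} [MeasurableSpace α] {ν : Measure α} {u v : α → ℝ≥0∞}
    (hu : AEMeasurable u ν) (hv : AEMeasurable v ν) :
    (∫⁻ x, u x * v x ∂ν) ^ 2 ≤ (∫⁻ x, u x ^ 2 ∂ν) * ∫⁻ x, v x ^ 2 ∂ν := by
  have hpq : (2:ℝ).HolderConjugate 2 := by
    rw [Real.holderConjugate_iff]; constructor <;> norm_num
  have H := ENNReal.lintegral_mul_le_Lp_mul_Lq ν hpq hu hv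
  calc (∫⁻ x, u x * v x ∂ν) ^ 2
      ≤ ((∫⁻ x, u x ^ (2:ℝ) ∂ν) ^ (1/(2:ℝ)) * (∫⁻ x, v x ^ (2:ℝ) ∂ν) ^ (1/(2:ℝ))) ^ 2 := by
        exact pow_le_pow_left' H 2
    _ = (∫⁻ x, u x ^ 2 ∂ν) * ∫⁻ x, v x ^ 2 ∂ν := by
        rw [mul_pow, ← ENNReal.rpow_natCast (_ ^ (1/(2:ℝ))) 2, ← ENNReal.rpow_natCast (_ ^ (1/(2:ℝ))) 2,
          ← ENNReal.rpow_mul, ← ENNReal.rpow_mul]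
        norm_num

section Dyadic
variable {φ : ℝ → ℂ} {C : ℝ≥0∞}

lemma sqrt_pow_nat (n : ℕ) : Real.sqrt ((2:ℝ)^n) = Real.sqrt 2 ^ n := by
  induction n with
  | zero => simp
  | succ k ih => rw [pow_succ, Real.sqrt_mul (by positivity), ih, pow_succ]

lemma one_lt_sqrt_two : 1 < Real.sqrt 2 := by
  have h := Real.sq_sqrt (by norm_num : (0:ℝ) ≤ 2)
  nlinarith [Real.sqrt_nonneg 2]

lemma weight_decay
    (hm : AEMeasurable φ (volume.restrict (Set.Ioi (0:ℝ))))
    (hC : ∀ x : ℝ, 0 < x →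
      ENNReal.ofReal x * ∫⁻ y in Set.Ioi x, (‖φ y‖₊ : ℝ≥0∞) ^ 2 ≤ C)
    {t : ℝ} (ht : 0 < t) :
    ∫⁻ x in Set.Ioi t, (‖φ x‖₊ : ℝ≥0∞) ^ 2 * ENNReal.ofReal (Real.sqrt x)
      ≤ C * ENNReal.ofReal (5 / Real.sqrt t) := by
  have hst : 0 < Real.sqrt t := Real.sqrt_pos.2 ht
  have hs2 : 0 < Real.sqrt 2 := by positivity
  -- dyadic cover
  have hcov : Set.Ioi t ⊆ ⋃ k : ℕ, Set.Ico ((2:ℝ)^k * t) ((2:ℝ)^(k+1) * t) := by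
    intro x hx
    have hx' : (1:ℝ) ≤ x / t := by
      rw [le_div_iff₀ ht]; simpa using (le_of_lt hx)
    obtain ⟨k, hk1, hk2⟩ := exists_nat_pow_near hx' (by norm_num : (1:ℝ) < 2)
    refine Set.mem_iUnion.2 ⟨k, ?_, ?_⟩
    · exact (le_div_iff₀ ht).1 hk1
    · exact (div_lt_iff₀ ht).1 hk2
  -- term bound
  have hterm : ∀ k : ℕ,
      (∫⁻ x in Set.Ico ((2:ℝ)^k * t) ((2:ℝ)^(k+1) * t),
        (‖φ x‖₊ : ℝ≥0∞) ^ 2 * ENNReal.ofReal (Real.sqrt x))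
      ≤ C * ENNReal.ofReal ((Real.sqrt 2)⁻¹ ^ k * (Real.sqrt 2 / Real.sqrt t)) := by
    intro k
    set a : ℝ := (2:ℝ)^k * t with ha_def
    set b : ℝ := (2:ℝ)^(k+1) * t with hb_def
    have ha : 0 < a := by positivity
    have hb : 0 < b := by positivity
    have hmes : AEMeasurable (fun x => ((‖φ x‖₊ : ℝ≥0∞)) ^ 2)
        (volume.restrict (Set.Ico a b)) := by
      have hsub : Set.Ico a b ⊆ Set.Ioi (0:ℝ) := fun x hx => lt_of_lt_of_le ha hx.1
      exact ((hm.mono_measure (Measure.restrict_mono hsub le_rfl)).enorm.pow_const 2)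
    have step1 : (∫⁻ x in Set.Ico a b, (‖φ x‖₊ : ℝ≥0∞) ^ 2 * ENNReal.ofReal (Real.sqrt x))
        ≤ (∫⁻ x in Set.Ico a b, (‖φ x‖₊ : ℝ≥0∞) ^ 2) * ENNReal.ofReal (Real.sqrt b) := by
      rw [← lintegral_mul_const'' _ hmes]
      refine lintegral_mono_ae (((ae_restrict_mem measurableSet_Ico)).mono ?_)
      intro x hx
      exact mul_le_mul_right (ENNReal.ofReal_le_ofReal
        (Real.sqrt_le_sqrt hx.2.le)) _
    have step2 : (∫⁻ x in Set.Ico a b, (‖φ x‖₊ : ℝ≥0∞) ^ 2)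
        ≤ C / ENNReal.ofReal a := by
      have h1 : (∫⁻ x in Set.Ico a b, (‖φ x‖₊ : ℝ≥0∞) ^ 2)
          ≤ ∫⁻ x in Set.Ioi a, (‖φ x‖₊ : ℝ≥0∞) ^ 2 := by
        rw [restrict_Ioi_eq_restrict_Ici]
        exact lintegral_mono_set Set.Ico_subset_Ici_self
      refine h1.trans ?_
      rw [ENNReal.le_div_iff_mul_le (Or.inl (by simp [ha])) (Or.inl ENNReal.ofReal_ne_top)]
      rw [mul_comm]; exact hC a ha
    calc (∫⁻ x in Set.Ico a b, (‖φ x‖₊ : ℝ≥0∞) ^ 2 * ENNReal.ofReal (Real.sqrt x))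
        ≤ (C / ENNReal.ofReal a) * ENNReal.ofReal (Real.sqrt b) :=
          step1.trans (mul_le_mul_left step2 _)
      _ = C * (ENNReal.ofReal (Real.sqrt b) * (ENNReal.ofReal a)⁻¹) := by
          rw [ENNReal.div_eq_inv_mul]; ring
      _ = C * ENNReal.ofReal (Real.sqrt b * a⁻¹) := by
          rw [ENNReal.ofReal_mul (Real.sqrt_nonneg b), ENNReal.ofReal_inv_of_pos ha]
      _ ≤ C * ENNReal.ofReal ((Real.sqrt 2)⁻¹ ^ k * (Real.sqrt 2 / Real.sqrt t)) := by
          refine mul_le_mul_right (ENNReal.ofReal_le_ofReal (le_of_eq ?_)) C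
          rw [hb_def, Real.sqrt_mul (by positivity), sqrt_pow_nat, ha_def]
          have h2k : (2:ℝ)^k = (Real.sqrt 2)^k * (Real.sqrt 2)^k := by
            rw [← mul_pow, Real.mul_self_sqrt (by norm_num)]
          rw [h2k]
          have hts : t = Real.sqrt t * Real.sqrt t := (Real.mul_self_sqrt ht.le).symm
          rw [inv_pow]
          field_simp
          rw [Real.sq_sqrt ht.le]
          ring
  calc (∫⁻ x in Set.Ioi t, (‖φ x‖₊ : ℝ≥0∞) ^ 2 * ENNReal.ofReal (Real.sqrt x))
      ≤ ∫⁻ x in ⋃ k : ℕ, Set.Ico ((2:ℝ)^k * t) ((2:ℝ)^(k+1) * t),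
          (‖φ x‖₊ : ℝ≥0∞) ^ 2 * ENNReal.ofReal (Real.sqrt x) :=
        lintegral_mono_set hcov
    _ ≤ ∑' k : ℕ, ∫⁻ x in Set.Ico ((2:ℝ)^k * t) ((2:ℝ)^(k+1) * t),
          (‖φ x‖₊ : ℝ≥0∞) ^ 2 * ENNReal.ofReal (Real.sqrt x) :=
        lintegral_iUnion_le _ _
    _ ≤ ∑' k : ℕ, C * ENNReal.ofReal ((Real.sqrt 2)⁻¹ ^ k * (Real.sqrt 2 / Real.sqrt t)) :=
        ENNReal.tsum_le_tsum hterm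
    _ = C * ENNReal.ofReal (Real.sqrt 2 / Real.sqrt t)
          * ∑' k : ℕ, (ENNReal.ofReal (Real.sqrt 2)⁻¹) ^ k := by
        rw [← ENNReal.tsum_mul_left]
        congr 1; ext k
        rw [ENNReal.ofReal_mul (by positivity), ENNReal.ofReal_pow (by positivity)]
        ring_nf
    _ = C * ENNReal.ofReal (Real.sqrt 2 / Real.sqrt t)
          * (1 - ENNReal.ofReal (Real.sqrt 2)⁻¹)⁻¹ := by
        rw [ENNReal.tsum_geometric]
    _ ≤ C * ENNReal.ofReal (5 / Real.sqrt t) := by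
        rw [mul_assoc]
        refine mul_le_mul_right ?_ C
        have hlt : (Real.sqrt 2)⁻¹ < 1 := by
          rw [inv_lt_one_iff₀]; right; exact one_lt_sqrt_two
        have h1 : (1:ℝ≥0∞) - ENNReal.ofReal (Real.sqrt 2)⁻¹
            = ENNReal.ofReal (1 - (Real.sqrt 2)⁻¹) := by
          rw [ENNReal.ofReal_sub _ (by positivity), ENNReal.ofReal_one]
        rw [h1, ← ENNReal.ofReal_inv_of_pos (by linarith), ← ENNReal.ofReal_mul (by positivity)]
        refine ENNReal.ofReal_le_ofReal ?_
        rw [div_mul_eq_mul_div, div_le_div_iff_of_pos_right hst]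
        have h2 := one_lt_sqrt_two
        have h3 : (0:ℝ) < 1 - (Real.sqrt 2)⁻¹ := by linarith [hlt]
        have key : Real.sqrt 2 ≤ 5 * (1 - (Real.sqrt 2)⁻¹) := by
          have h5 : (Real.sqrt 2)⁻¹ * Real.sqrt 2 = 1 := inv_mul_cancel₀ (by positivity)
          nlinarith [Real.sq_sqrt (by norm_num : (0:ℝ) ≤ 2), sq_nonneg (5*Real.sqrt 2 - 7)]
        calc Real.sqrt 2 * (1 - (Real.sqrt 2)⁻¹)⁻¹
            ≤ (5 * (1 - (Real.sqrt 2)⁻¹)) * (1 - (Real.sqrt 2)⁻¹)⁻¹ :=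
              mul_le_mul_of_nonneg_right key (by positivity)
          _ = 5 := by
              field_simp
              exact div_self (sub_ne_zero.2 (ne_of_gt h2))
end Dyadic

section CS

lemma lintegral_inv_sqrt {x : ℝ} (hx : 0 < x) :
    ∫⁻ y in Set.Ioc (0:ℝ) x, ENNReal.ofReal (Real.sqrt y)⁻¹
      = ENNReal.ofReal (2 * Real.sqrt x) := by
  have hint' : IntervalIntegrable (fun y : ℝ => y ^ (-1/2 : ℝ)) volume 0 x :=
    intervalIntegral.intervalIntegrable_rpow' (by norm_num)
  have heq : Set.EqOn (fun y : ℝ => y ^ (-1/2 : ℝ)) (fun y => (Real.sqrt y)⁻¹)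
      (Set.Ioc 0 x) := by
    intro y hy
    have hy0 : 0 < y := hy.1
    simp only
    rw [Real.sqrt_eq_rpow, ← Real.rpow_neg hy0.le]
    norm_num
  have hint : IntegrableOn (fun y => (Real.sqrt y)⁻¹) (Set.Ioc (0:ℝ) x) volume := by
    refine (hint'.1.congr_fun heq measurableSet_Ioc)
  rw [← MeasureTheory.ofReal_integral_eq_lintegral_ofReal hint]
  · congr 1
    have h1 : ∫ y in Set.Ioc (0:ℝ) x, (Real.sqrt y)⁻¹
        = ∫ y in (0:ℝ)..x, y ^ (-1/2 : ℝ) := by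
      rw [intervalIntegral.integral_of_le hx.le]
      exact (setIntegral_congr_fun measurableSet_Ioc heq).symm
    rw [h1, integral_rpow (Or.inl (by norm_num))]
    rw [show (-1/2+1:ℝ) = 1/2 by norm_num, Real.zero_rpow (by norm_num : (1/2:ℝ) ≠ 0),
      Real.sqrt_eq_rpow]
    ring
  · exact (ae_restrict_mem measurableSet_Ioc).mono fun y _ => by positivity

lemma CS_weighted {s : Set ℝ} (hs : MeasurableSet s) (hsub : s ⊆ Set.Ioi (0:ℝ))
    {h g : ℝ → ℝ≥0∞}
    (hh : AEMeasurable h (volume.restrict s)) (hg : AEMeasurable g (volume.restrict s)) :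
    (∫⁻ y in s, h y * g y) ^ 2
      ≤ (∫⁻ y in s, h y ^ 2 * ENNReal.ofReal (Real.sqrt y))
        * ∫⁻ y in s, g y ^ 2 * ENNReal.ofReal (Real.sqrt y)⁻¹ := by
  set w : ℝ → ℝ≥0∞ := fun y => ENNReal.ofReal (Real.sqrt (Real.sqrt y)) with hw_def
  have hwm : Measurable w :=
    ENNReal.measurable_ofReal.comp
      (Real.continuous_sqrt.comp Real.continuous_sqrt).measurable
  have hpos : ∀ᵐ y ∂volume.restrict s, 0 < y :=
    (ae_restrict_mem hs).mono fun y hy => hsub hy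
  have hw2 : ∀ y, w y ^ 2 = ENNReal.ofReal (Real.sqrt y) := by
    intro y
    rw [hw_def, ← ENNReal.ofReal_pow (Real.sqrt_nonneg _), Real.sq_sqrt (Real.sqrt_nonneg _)]
  have h1 : (fun y => h y * g y)
      =ᵐ[volume.restrict s] fun y => (h y * w y) * (g y * (w y)⁻¹) := by
    refine hpos.mono fun y hy => ?_
    have hw0 : w y ≠ 0 := by
      simp only [hw_def, ne_eq, ENNReal.ofReal_eq_zero, not_le]
      positivity
    have hwt : w y ≠ ⊤ := ENNReal.ofReal_ne_top
    show h y * g y = h y * w y * (g y * (w y)⁻¹)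
    symm
    calc h y * w y * (g y * (w y)⁻¹) = h y * g y * (w y * (w y)⁻¹) := by ring
      _ = h y * g y := by rw [ENNReal.mul_inv_cancel hw0 hwt, mul_one]
  calc (∫⁻ y in s, h y * g y) ^ 2
      = (∫⁻ y in s, (h y * w y) * (g y * (w y)⁻¹)) ^ 2 := by rw [lintegral_congr_ae h1]
    _ ≤ (∫⁻ y in s, (h y * w y) ^ 2) * ∫⁻ y in s, (g y * (w y)⁻¹) ^ 2 :=
        lintegral_mul_sq_le (hh.mul hwm.aemeasurable) (hg.mul hwm.inv.aemeasurable)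
    _ ≤ (∫⁻ y in s, h y ^ 2 * ENNReal.ofReal (Real.sqrt y))
        * ∫⁻ y in s, g y ^ 2 * ENNReal.ofReal (Real.sqrt y)⁻¹ := by
        refine mul_le_mul'
          (le_of_eq (lintegral_congr fun y => by show _ = _; rw [mul_pow, hw2]))
          (le_of_eq (lintegral_congr_ae (hpos.mono fun y hy => ?_)))
        show (g y * (w y)⁻¹) ^ 2 = g y ^ 2 * ENNReal.ofReal (Real.sqrt y)⁻¹
        rw [mul_pow, ← ENNReal.inv_pow, hw2, ENNReal.ofReal_inv_of_pos (Real.sqrt_pos.2 hy)]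

end CS

section Hardy
variable {φ : ℝ → ℂ} {C : ℝ≥0∞}

lemma hardy_plus
    (hm : AEMeasurable φ (volume.restrict (Set.Ioi (0:ℝ))))
    (hC : ∀ x : ℝ, 0 < x →
      ENNReal.ofReal x * ∫⁻ y in Set.Ioi x, (‖φ y‖₊ : ℝ≥0∞) ^ 2 ≤ C)
    {g : ℝ → ℝ≥0∞} (hg : AEMeasurable g (volume.restrict (Set.Ioi (0:ℝ)))) :
    ∫⁻ x in Set.Ioi (0:ℝ), (‖φ x‖₊ : ℝ≥0∞) ^ 2 * (∫⁻ y in Set.Ioc (0:ℝ) x, g y) ^ 2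
      ≤ 10 * C * ∫⁻ y in Set.Ioi (0:ℝ), g y ^ 2 := by
  set ν := volume.restrict (Set.Ioi (0:ℝ)) with hν
  set A : ℝ → ℝ≥0∞ := fun x => (‖φ x‖₊ : ℝ≥0∞) ^ 2 * ENNReal.ofReal (2 * Real.sqrt x)
    with hA_def
  set B : ℝ → ℝ≥0∞ := fun y => g y ^ 2 * ENNReal.ofReal (Real.sqrt y) with hB_def
  have hA : AEMeasurable A ν := by
    exact (hm.enorm.pow_const 2).mul
      (ENNReal.measurable_ofReal.comp
        ((continuous_const.mul Real.continuous_sqrt).measurable)).aemeasurable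
  have hB : AEMeasurable B ν := by
    exact (hg.pow_const 2).mul
      (ENNReal.measurable_ofReal.comp Real.continuous_sqrt.measurable).aemeasurable
  have hAne : ∀ x, A x ≠ ⊤ := fun x =>
    ENNReal.mul_ne_top (by simp [ENNReal.pow_ne_top]) ENNReal.ofReal_ne_top
  -- pointwise Cauchy-Schwarz
  have hpt : ∀ x : ℝ, 0 < x →
      (‖φ x‖₊ : ℝ≥0∞) ^ 2 * (∫⁻ y in Set.Ioc (0:ℝ) x, g y) ^ 2
        ≤ A x * ∫⁻ y in Set.Ioc (0:ℝ) x, B y := by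
    intro x hx
    have hsub : Set.Ioc (0:ℝ) x ⊆ Set.Ioi 0 := Set.Ioc_subset_Ioi_self
    have hg' : AEMeasurable g (volume.restrict (Set.Ioc (0:ℝ) x)) :=
      hg.mono_measure (Measure.restrict_mono hsub le_rfl)
    have h1 := CS_weighted measurableSet_Ioc hsub hg'
      (aemeasurable_const : AEMeasurable (fun _ => (1:ℝ≥0∞)) _)
    simp only [mul_one, one_pow, one_mul] at h1
    rw [lintegral_inv_sqrt hx] at h1
    calc (‖φ x‖₊ : ℝ≥0∞) ^ 2 * (∫⁻ y in Set.Ioc (0:ℝ) x, g y) ^ 2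
        ≤ (‖φ x‖₊ : ℝ≥0∞) ^ 2 *
            ((∫⁻ y in Set.Ioc (0:ℝ) x, g y ^ 2 * ENNReal.ofReal (Real.sqrt y))
              * ENNReal.ofReal (2 * Real.sqrt x)) := mul_le_mul_right h1 _
      _ = A x * ∫⁻ y in Set.Ioc (0:ℝ) x, B y := by rw [hA_def, hB_def]; ring
  -- rewrite as double integral with indicator
  set S : Set (ℝ × ℝ) := {p | p.2 ≤ p.1} with hS_def
  have hSmeas : MeasurableSet S := measurableSet_le measurable_snd measurable_fst
  set F : ℝ → ℝ → ℝ≥0∞ := fun x y => (A x * B y) * S.indicator 1 (x, y) with hF_def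
  have hF : AEMeasurable (Function.uncurry F) (ν.prod ν) := by
    exact (hA.comp_fst.mul hB.comp_snd).mul ((measurable_one.indicator hSmeas).aemeasurable)
  have hdouble : ∀ x : ℝ, 0 < x →
      A x * ∫⁻ y in Set.Ioc (0:ℝ) x, B y = ∫⁻ y, F x y ∂ν := by
    intro x hx
    have h2 : ∀ y : ℝ, F x y = (Set.Iic x).indicator (fun y => A x * B y) y := by
      intro y
      by_cases hy : y ≤ x
      · simp [hF_def, hS_def, Set.indicator_of_mem, hy, Set.mem_Iic]
      · simp [hF_def, hS_def, Set.indicator_of_notMem, hy, Set.mem_Iic]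
    rw [lintegral_congr h2, lintegral_indicator measurableSet_Iic, hν,
      Measure.restrict_restrict measurableSet_Iic, Set.Iic_inter_Ioi,
      ← lintegral_const_mul' _ _ (hAne x)]
  have hdouble2 : ∀ y : ℝ, 0 < y →
      ∫⁻ x, F x y ∂ν ≤ B y * (2 * (C * ENNReal.ofReal (5 / Real.sqrt y))) := by
    intro y hy
    have h2 : ∀ x : ℝ, F x y = (Set.Ici y).indicator (fun x => A x * B y) x := by
      intro x
      by_cases hxy : y ≤ x
      · simp [hF_def, hS_def, Set.indicator_of_mem, hxy, Set.mem_Ici]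
      · simp [hF_def, hS_def, Set.indicator_of_notMem, hxy, Set.mem_Ici]
    rw [lintegral_congr h2, lintegral_indicator measurableSet_Ici, hν,
      Measure.restrict_restrict measurableSet_Ici]
    have h3 : Set.Ici y ∩ Set.Ioi 0 = Set.Ici y := by
      apply Set.inter_eq_left.2
      exact fun z hz => lt_of_lt_of_le hy hz
    rw [h3, ← restrict_Ioi_eq_restrict_Ici]
    have h4 : ∫⁻ x in Set.Ioi y, A x * B y
        = (∫⁻ x in Set.Ioi y, A x) * B y := by
      rw [← lintegral_mul_const'' _ (hA.mono_measure (Measure.restrict_mono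
        (fun z (hz : z ∈ Set.Ioi y) => lt_trans hy hz) le_rfl))]
    rw [h4, mul_comm]
    refine mul_le_mul_right ?_ (B y)
    have h5 : ∫⁻ x in Set.Ioi y, A x
        = 2 * ∫⁻ x in Set.Ioi y, (‖φ x‖₊ : ℝ≥0∞) ^ 2 * ENNReal.ofReal (Real.sqrt x) := by
      rw [← lintegral_const_mul' _ _ (by norm_num : (2:ℝ≥0∞) ≠ ⊤)]
      refine lintegral_congr fun x => ?_
      rw [hA_def]
      show (‖φ x‖₊ : ℝ≥0∞) ^ 2 * ENNReal.ofReal (2 * Real.sqrt x) = _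
      rw [ENNReal.ofReal_mul (by norm_num), ENNReal.ofReal_ofNat]
      ring
    rw [h5]
    exact mul_le_mul_right (weight_decay hm hC hy) 2
  -- put everything together
  calc ∫⁻ x in Set.Ioi (0:ℝ), (‖φ x‖₊ : ℝ≥0∞) ^ 2 * (∫⁻ y in Set.Ioc (0:ℝ) x, g y) ^ 2
      ≤ ∫⁻ x, (∫⁻ y, F x y ∂ν) ∂ν := by
        refine lintegral_mono_ae ((ae_restrict_mem measurableSet_Ioi).mono fun x hx => ?_)
        rw [← hdouble x hx]
        exact hpt x hx
    _ = ∫⁻ y, (∫⁻ x, F x y ∂ν) ∂ν := lintegral_lintegral_swap hF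
    _ ≤ ∫⁻ y, B y * (2 * (C * ENNReal.ofReal (5 / Real.sqrt y))) ∂ν := by
        refine lintegral_mono_ae ((ae_restrict_mem measurableSet_Ioi).mono fun y hy => ?_)
        exact hdouble2 y hy
    _ ≤ ∫⁻ y, 10 * C * g y ^ 2 ∂ν := by
        refine lintegral_mono_ae ((ae_restrict_mem measurableSet_Ioi).mono fun y hy => ?_)
        have hsy : 0 < Real.sqrt y := Real.sqrt_pos.2 hy
        have key : ENNReal.ofReal (Real.sqrt y) * ENNReal.ofReal (5 / Real.sqrt y)
            = ENNReal.ofReal 5 := by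
          rw [← ENNReal.ofReal_mul (Real.sqrt_nonneg y)]
          congr 1
          field_simp
        apply le_of_eq
        calc B y * (2 * (C * ENNReal.ofReal (5 / Real.sqrt y)))
            = (ENNReal.ofReal (Real.sqrt y) * ENNReal.ofReal (5 / Real.sqrt y))
                * (2 * C * g y ^ 2) := by rw [hB_def]; ring
          _ = 10 * C * g y ^ 2 := by
              rw [key, show ENNReal.ofReal (5:ℝ) = (5:ℝ≥0∞) by
                simp [ENNReal.ofReal_ofNat]]
              ring
    _ = 10 * C * ∫⁻ y in Set.Ioi (0:ℝ), g y ^ 2 :=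
        lintegral_const_mul'' _ (hg.pow_const 2)

end Hardy

section HardyMinus
variable {φ : ℝ → ℂ} {C : ℝ≥0∞}

lemma hardy_minus
    (hm : AEMeasurable φ (volume.restrict (Set.Ioi (0:ℝ))))
    (hC : ∀ x : ℝ, 0 < x →
      ENNReal.ofReal x * ∫⁻ y in Set.Ioi x, (‖φ y‖₊ : ℝ≥0∞) ^ 2 ≤ C)
    (hCne : C ≠ ⊤)
    {g : ℝ → ℝ≥0∞} (hg : AEMeasurable g (volume.restrict (Set.Ioi (0:ℝ)))) :
    ∫⁻ x in Set.Ioi (0:ℝ), (∫⁻ y in Set.Ioi x, (‖φ y‖₊ : ℝ≥0∞) * g y) ^ 2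
      ≤ 10 * C * ∫⁻ y in Set.Ioi (0:ℝ), g y ^ 2 := by
  set ν := volume.restrict (Set.Ioi (0:ℝ)) with hν
  set A : ℝ → ℝ≥0∞ := fun x => C * ENNReal.ofReal (5 / Real.sqrt x) with hA_def
  set B : ℝ → ℝ≥0∞ := fun y => g y ^ 2 * ENNReal.ofReal (Real.sqrt y)⁻¹ with hB_def
  have hA : AEMeasurable A ν := by
    exact aemeasurable_const.mul
      (ENNReal.measurable_ofReal.comp
        (measurable_const.div Real.continuous_sqrt.measurable)).aemeasurable
  have hB : AEMeasurable B ν := by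
    exact (hg.pow_const 2).mul
      (ENNReal.measurable_ofReal.comp Real.continuous_sqrt.measurable.inv).aemeasurable
  have hAne : ∀ x, A x ≠ ⊤ := fun x => ENNReal.mul_ne_top hCne ENNReal.ofReal_ne_top
  -- pointwise Cauchy-Schwarz
  have hpt : ∀ x : ℝ, 0 < x →
      (∫⁻ y in Set.Ioi x, (‖φ y‖₊ : ℝ≥0∞) * g y) ^ 2
        ≤ A x * ∫⁻ y in Set.Ioi x, B y := by
    intro x hx
    have hsub : Set.Ioi x ⊆ Set.Ioi 0 := fun z hz => lt_trans hx hz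
    have hg' : AEMeasurable g (volume.restrict (Set.Ioi x)) :=
      hg.mono_measure (Measure.restrict_mono hsub le_rfl)
    have hm' : AEMeasurable (fun y => (‖φ y‖₊ : ℝ≥0∞)) (volume.restrict (Set.Ioi x)) :=
      (hm.mono_measure (Measure.restrict_mono hsub le_rfl)).enorm
    have h1 := CS_weighted measurableSet_Ioi hsub hm' hg'
    calc (∫⁻ y in Set.Ioi x, (‖φ y‖₊ : ℝ≥0∞) * g y) ^ 2
        ≤ (∫⁻ y in Set.Ioi x, (‖φ y‖₊ : ℝ≥0∞) ^ 2 * ENNReal.ofReal (Real.sqrt y))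
            * ∫⁻ y in Set.Ioi x, g y ^ 2 * ENNReal.ofReal (Real.sqrt y)⁻¹ := h1
      _ ≤ (C * ENNReal.ofReal (5 / Real.sqrt x))
            * ∫⁻ y in Set.Ioi x, g y ^ 2 * ENNReal.ofReal (Real.sqrt y)⁻¹ :=
          mul_le_mul_left (weight_decay hm hC hx) _
      _ = A x * ∫⁻ y in Set.Ioi x, B y := by rw [hA_def, hB_def]
  -- double integral with indicator
  set S : Set (ℝ × ℝ) := {p | p.1 < p.2} with hS_def
  have hSmeas : MeasurableSet S := measurableSet_lt measurable_fst measurable_snd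
  set F : ℝ → ℝ → ℝ≥0∞ := fun x y => (A x * B y) * S.indicator 1 (x, y) with hF_def
  have hF : AEMeasurable (Function.uncurry F) (ν.prod ν) := by
    exact (hA.comp_fst.mul hB.comp_snd).mul ((measurable_one.indicator hSmeas).aemeasurable)
  have hdouble : ∀ x : ℝ, 0 < x →
      A x * ∫⁻ y in Set.Ioi x, B y = ∫⁻ y, F x y ∂ν := by
    intro x hx
    have h2 : ∀ y : ℝ, F x y = (Set.Ioi x).indicator (fun y => A x * B y) y := by
      intro y
      by_cases hy : x < y
      · simp [hF_def, hS_def, Set.indicator_of_mem, hy, Set.mem_Ioi]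
      · simp [hF_def, hS_def, Set.indicator_of_notMem, hy, Set.mem_Ioi]
    have h3 : Set.Ioi x ∩ Set.Ioi 0 = Set.Ioi x :=
      Set.inter_eq_left.2 fun z hz => lt_trans hx hz
    rw [lintegral_congr h2, lintegral_indicator measurableSet_Ioi, hν,
      Measure.restrict_restrict measurableSet_Ioi, h3,
      ← lintegral_const_mul' _ _ (hAne x)]
  have hdouble2 : ∀ y : ℝ, 0 < y →
      ∫⁻ x, F x y ∂ν ≤ B y * (C * ENNReal.ofReal 5 * ENNReal.ofReal (2 * Real.sqrt y)) := by
    intro y hy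
    have h2 : ∀ x : ℝ, F x y = (Set.Iio y).indicator (fun x => A x * B y) x := by
      intro x
      by_cases hxy : x < y
      · simp [hF_def, hS_def, Set.indicator_of_mem, hxy, Set.mem_Iio]
      · simp [hF_def, hS_def, Set.indicator_of_notMem, hxy, Set.mem_Iio]
    rw [lintegral_congr h2, lintegral_indicator measurableSet_Iio, hν,
      Measure.restrict_restrict measurableSet_Iio]
    have h3 : Set.Iio y ∩ Set.Ioi 0 = Set.Ioo 0 y := by
      rw [Set.inter_comm, Set.Ioi_inter_Iio]
    rw [h3]
    have h4 : ∫⁻ x in Set.Ioo (0:ℝ) y, A x * B y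
        = (∫⁻ x in Set.Ioo (0:ℝ) y, A x) * B y := by
      rw [← lintegral_mul_const'' _ (hA.mono_measure (Measure.restrict_mono
        (fun z hz => hz.1) le_rfl))]
    rw [h4, mul_comm]
    refine mul_le_mul_right ?_ (B y)
    have h5 : ∫⁻ x in Set.Ioo (0:ℝ) y, A x
        = C * ENNReal.ofReal 5 * ∫⁻ x in Set.Ioo (0:ℝ) y, ENNReal.ofReal (Real.sqrt x)⁻¹ := by
      rw [← lintegral_const_mul' _ _ (ENNReal.mul_ne_top hCne ENNReal.ofReal_ne_top)]
      refine lintegral_congr fun x => ?_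
      show A x = C * ENNReal.ofReal 5 * ENNReal.ofReal (Real.sqrt x)⁻¹
      rw [hA_def]
      show C * ENNReal.ofReal (5 / Real.sqrt x) = _
      rw [div_eq_mul_inv, ENNReal.ofReal_mul (by norm_num)]
      ring
    rw [h5, restrict_Ioo_eq_restrict_Ioc, lintegral_inv_sqrt hy]
  -- put everything together
  calc ∫⁻ x in Set.Ioi (0:ℝ), (∫⁻ y in Set.Ioi x, (‖φ y‖₊ : ℝ≥0∞) * g y) ^ 2
      ≤ ∫⁻ x, (∫⁻ y, F x y ∂ν) ∂ν := by
        refine lintegral_mono_ae ((ae_restrict_mem measurableSet_Ioi).mono fun x hx => ?_)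
        rw [← hdouble x hx]
        exact hpt x hx
    _ = ∫⁻ y, (∫⁻ x, F x y ∂ν) ∂ν := lintegral_lintegral_swap hF
    _ ≤ ∫⁻ y, B y * (C * ENNReal.ofReal 5 * ENNReal.ofReal (2 * Real.sqrt y)) ∂ν := by
        refine lintegral_mono_ae ((ae_restrict_mem measurableSet_Ioi).mono fun y hy => ?_)
        exact hdouble2 y hy
    _ ≤ ∫⁻ y, 10 * C * g y ^ 2 ∂ν := by
        refine lintegral_mono_ae ((ae_restrict_mem measurableSet_Ioi).mono fun y hy => ?_)
        have hsy : 0 < Real.sqrt y := Real.sqrt_pos.2 hy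
        apply le_of_eq
        have key : ENNReal.ofReal (Real.sqrt y)⁻¹ * ENNReal.ofReal (2 * Real.sqrt y)
            = ENNReal.ofReal 2 := by
          rw [← ENNReal.ofReal_mul (by positivity)]
          congr 1
          field_simp
        calc B y * (C * ENNReal.ofReal 5 * ENNReal.ofReal (2 * Real.sqrt y))
            = (ENNReal.ofReal (Real.sqrt y)⁻¹ * ENNReal.ofReal (2 * Real.sqrt y))
                * (ENNReal.ofReal 5 * C * g y ^ 2) := by rw [hB_def]; ring
          _ = 10 * C * g y ^ 2 := by
              rw [key, show ENNReal.ofReal (5:ℝ) = (5:ℝ≥0∞) by simp [ENNReal.ofReal_ofNat],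
                show ENNReal.ofReal (2:ℝ) = (2:ℝ≥0∞) by simp [ENNReal.ofReal_ofNat]]
              ring
    _ = 10 * C * ∫⁻ y in Set.Ioi (0:ℝ), g y ^ 2 :=
        lintegral_const_mul'' _ (hg.pow_const 2)

end HardyMinus

section Plumbing
variable {φ : ℝ → ℂ} {C : ℝ≥0∞}

lemma mem_cover {x : ℝ} (hx : 0 < x) :
    ∃ n : ℕ, ((n:ℝ)+1)⁻¹ ≤ x ∧ x ≤ (n:ℝ)+1 := by
  obtain ⟨n₁, hn₁⟩ := exists_nat_gt x⁻¹
  obtain ⟨n₂, hn₂⟩ := exists_nat_gt x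
  refine ⟨n₁ + n₂, ?_, ?_⟩
  · rw [inv_le_comm₀ (by positivity) hx]
    push_cast
    have := Nat.cast_nonneg (α := ℝ) n₂
    linarith
  · push_cast
    have := Nat.cast_nonneg (α := ℝ) n₁
    linarith

lemma aesm_phi
    (hφ : ∀ K : Set ℝ, IsCompact K → K ⊆ Set.Ioi 0 → MemLp φ 2 (volume.restrict K)) :
    AEStronglyMeasurable φ (volume.restrict (Set.Ioi (0:ℝ))) := by
  have hcov : Set.Ioi (0:ℝ) = ⋃ n : ℕ, Set.Icc ((n:ℝ)+1)⁻¹ ((n:ℝ)+1) := by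
    ext x
    simp only [Set.mem_iUnion, Set.mem_Ioi, Set.mem_Icc]
    constructor
    · intro hx
      obtain ⟨n, h1, h2⟩ := mem_cover hx
      exact ⟨n, h1, h2⟩
    · rintro ⟨n, h1, h2⟩
      exact lt_of_lt_of_le (by positivity) h1
  rw [hcov]
  rw [aestronglyMeasurable_iUnion_iff]
  intro n
  exact (hφ _ isCompact_Icc (fun z hz => lt_of_lt_of_le (by positivity) hz.1)).1

lemma phi_L2_tail
    (hφm : AEStronglyMeasurable φ (volume.restrict (Set.Ioi (0:ℝ))))
    (hC : ∀ x : ℝ, 0 < x →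
      ENNReal.ofReal x * ∫⁻ y in Set.Ioi x, (‖φ y‖₊ : ℝ≥0∞) ^ 2 ≤ C)
    (hCne : C ≠ ⊤) {x : ℝ} (hx : 0 < x) :
    MemLp φ 2 (volume.restrict (Set.Ioi x)) := by
  rw [memℒp_two_iff']
  constructor
  · exact hφm.mono_measure (Measure.restrict_mono (fun z hz => lt_trans hx hz) le_rfl)
  · by_contra h
    simp only [not_lt, top_le_iff] at h
    have := hC x hx
    rw [h, ENNReal.mul_top (by simp [hx, ne_of_gt])] at this
    exact hCne (top_le_iff.1 this)

lemma integrableOn_Ioc_of_memL2 {f : ℝ → ℂ}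
    (hf : MemLp f 2 (volume.restrict (Set.Ioi (0:ℝ)))) (x : ℝ) :
    IntegrableOn f (Set.Ioc (0:ℝ) x) volume := by
  rcases le_or_gt x 0 with hx | hx
  · rw [Set.Ioc_eq_empty (not_lt.2 hx)]
    simp [IntegrableOn]
  · have hres : volume.restrict (Set.Ioc (0:ℝ) x)
        = (volume.restrict (Set.Ioi (0:ℝ))).restrict (Set.Ioc (0:ℝ) x) := by
      rw [Measure.restrict_restrict measurableSet_Ioc,
        Set.inter_eq_left.2 Set.Ioc_subset_Ioi_self]
    have h2 : MemLp f 2 (volume.restrict (Set.Ioc (0:ℝ) x)) := by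
      rw [hres]; exact hf.restrict _
    haveI : IsFiniteMeasure (volume.restrict (Set.Ioc (0:ℝ) x)) :=
      ⟨by rw [Measure.restrict_apply_univ]; exact measure_Ioc_lt_top⟩
    exact h2.integrable one_le_two

lemma integrableOn_mul_of_L2 {f g : ℝ → ℂ} {s : Set ℝ}
    (hf : MemLp f 2 (volume.restrict s)) (hg : MemLp g 2 (volume.restrict s)) :
    IntegrableOn (fun y => f y * g y) s volume := by
  have h := hg.smul (q := 2) (p := 2) (r := 1) hf
  · rw [IntegrableOn, ← memLp_one_iff_integrable]
    have heq : (fun y => f y * g y) = f • g := by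
      ext y; simp [Pi.smul_apply', smul_eq_mul]
    rw [heq]
    exact h

lemma primitive_eq_interval {f : ℝ → ℂ}
    (hf : MemLp f 2 (volume.restrict (Set.Ioi (0:ℝ)))) :
    ∀ x : ℝ, ∫ y in Set.Ioc (0:ℝ) x, f y
      = ∫ y in (0:ℝ)..x, (Set.Ioi (0:ℝ)).indicator f y := by
  intro x
  rcases le_or_gt 0 x with hx | hx
  · rw [intervalIntegral.integral_of_le hx]
    refine (setIntegral_congr_fun measurableSet_Ioc fun y hy => ?_).symm
    exact Set.indicator_of_mem (hy.1 : y ∈ Set.Ioi 0) f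
  · rw [Set.Ioc_eq_empty (not_lt.2 hx.le)]
    rw [intervalIntegral.integral_symm, Measure.restrict_empty, integral_zero_measure]
    rw [intervalIntegral.integral_of_le hx.le]
    rw [setIntegral_congr_fun measurableSet_Ioc
      (fun y (hy : y ∈ Set.Ioc x 0) => Set.indicator_of_notMem
        (by simpa using hy.2 : y ∉ Set.Ioi (0:ℝ)) f)]
    simp

lemma intervalIntegrable_indicator_of_L2 {f : ℝ → ℂ}
    (hf : MemLp f 2 (volume.restrict (Set.Ioi (0:ℝ)))) (a b : ℝ) :
    IntervalIntegrable ((Set.Ioi (0:ℝ)).indicator f) volume a b := by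
  rw [intervalIntegrable_iff]
  have hsub : Set.Ioi 0 ∩ Set.uIoc a b ⊆ Set.Ioc 0 (max a b) := by
    rintro z ⟨hz1, hz2⟩
    rw [Set.mem_uIoc] at hz2
    refine ⟨hz1, ?_⟩
    rcases hz2 with h | h
    · exact h.2.trans (le_max_right a b)
    · exact h.2.trans (le_max_left a b)
  have hint : IntegrableOn f (Set.Ioi 0 ∩ Set.uIoc a b) volume :=
    (integrableOn_Ioc_of_memL2 hf (max a b)).mono_set hsub
  refine (integrable_indicator_iff measurableSet_Ioi).2 ?_
  rw [IntegrableOn, Measure.restrict_restrict measurableSet_Ioi]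
  exact hint

lemma continuous_primitive_of_L2 {f : ℝ → ℂ}
    (hf : MemLp f 2 (volume.restrict (Set.Ioi (0:ℝ)))) :
    Continuous (fun x => ∫ y in Set.Ioc (0:ℝ) x, f y) := by
  have h := intervalIntegral.continuous_primitive
    (intervalIntegrable_indicator_of_L2 hf) 0
  refine Continuous.congr h fun x => (primitive_eq_interval hf x).symm

end Plumbing

section Minus
variable {φ : ℝ → ℂ} {C : ℝ≥0∞}

lemma restrict_tail_eq {x : ℝ} (hx : 0 < x) :
    (volume.restrict (Set.Ioi (0:ℝ))).restrict (Set.Ioi x) = volume.restrict (Set.Ioi x) := by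
  rw [Measure.restrict_restrict measurableSet_Ioi]
  congr 1
  exact Set.inter_eq_left.2 fun z hz => lt_trans hx hz

lemma memL2_tail_of_memL2 {f : ℝ → ℂ}
    (hf : MemLp f 2 (volume.restrict (Set.Ioi (0:ℝ)))) {x : ℝ} (hx : 0 < x) :
    MemLp f 2 (volume.restrict (Set.Ioi x)) := by
  rw [← restrict_tail_eq hx]; exact hf.restrict _

lemma integrableOn_tail
    (hφm : AEStronglyMeasurable φ (volume.restrict (Set.Ioi (0:ℝ))))
    (hC : ∀ x : ℝ, 0 < x →
      ENNReal.ofReal x * ∫⁻ y in Set.Ioi x, (‖φ y‖₊ : ℝ≥0∞) ^ 2 ≤ C)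
    (hCne : C ≠ ⊤) {f : ℝ → ℂ}
    (hf : MemLp f 2 (volume.restrict (Set.Ioi (0:ℝ)))) {x : ℝ} (hx : 0 < x) :
    IntegrableOn (fun y => φ y * f y) (Set.Ioi x) volume :=
  integrableOn_mul_of_L2 (phi_L2_tail hφm hC hCne hx) (memL2_tail_of_memL2 hf hx)

lemma split_tail {f : ℝ → ℂ} {a b : ℝ}
    (hint : IntegrableOn (fun y => φ y * f y) (Set.Ioi a) volume) (hab : a ≤ b) :
    ∫ y in Set.Ioi a, φ y * f y
      = (∫ y in Set.Ioc a b, φ y * f y) + ∫ y in Set.Ioi b, φ y * f y := by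
  rw [← setIntegral_union Set.Ioc_disjoint_Ioi_same measurableSet_Ioi
    (hint.mono_set Set.Ioc_subset_Ioi_self)
    (hint.mono_set (fun z hz => lt_of_le_of_lt hab hz)),
    Set.Ioc_union_Ioi_eq_Ioi hab]

lemma aesm_minus
    (hφm : AEStronglyMeasurable φ (volume.restrict (Set.Ioi (0:ℝ))))
    (hC : ∀ x : ℝ, 0 < x →
      ENNReal.ofReal x * ∫⁻ y in Set.Ioi x, (‖φ y‖₊ : ℝ≥0∞) ^ 2 ≤ C)
    (hCne : C ≠ ⊤) {f : ℝ → ℂ}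
    (hf : MemLp f 2 (volume.restrict (Set.Ioi (0:ℝ)))) :
    AEStronglyMeasurable (fun x => ∫ y in Set.Ioi x, φ y * f y)
      (volume.restrict (Set.Ioi (0:ℝ))) := by
  have hcov : Set.Ioi (0:ℝ) = ⋃ n : ℕ, Set.Ioi ((n:ℝ)+1)⁻¹ := by
    ext x
    simp only [Set.mem_iUnion, Set.mem_Ioi]
    constructor
    · intro hx
      obtain ⟨n, h1, _⟩ := mem_cover (half_pos hx)
      exact ⟨n, lt_of_le_of_lt h1 (half_lt_self hx)⟩
    · rintro ⟨n, hn⟩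
      exact lt_trans (by positivity) hn
  rw [hcov, aestronglyMeasurable_iUnion_iff]
  intro n
  set ε : ℝ := ((n:ℝ)+1)⁻¹ with hε_def
  have hε : 0 < ε := by positivity
  have hε2 : 0 < ε/2 := by positivity
  set W : ℝ → ℂ := (Set.Ioi (ε/2)).indicator (fun y => φ y * f y) with hW_def
  have hWint : ∀ a b, IntervalIntegrable W volume a b := by
    intro a b
    rw [intervalIntegrable_iff]
    refine (integrable_indicator_iff measurableSet_Ioi).2 ?_
    rw [IntegrableOn, Measure.restrict_restrict measurableSet_Ioi]
    exact (integrableOn_tail hφm hC hCne hf hε2).mono_set Set.inter_subset_left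
  have hcont : Continuous (fun x => (∫ y in Set.Ioi (ε/2), φ y * f y)
      - ∫ y in (ε/2)..x, W y) :=
    continuous_const.sub (intervalIntegral.continuous_primitive hWint (ε/2))
  refine hcont.aestronglyMeasurable.congr ?_
  refine (ae_restrict_mem measurableSet_Ioi).mono fun x (hx : ε < x) => ?_
  have hεx : ε/2 ≤ x := le_of_lt (lt_of_lt_of_le (half_lt_self hε) hx.le)
  have h1 : ∫ y in (ε/2)..x, W y = ∫ y in Set.Ioc (ε/2) x, φ y * f y := by
    rw [intervalIntegral.integral_of_le hεx]
    exact setIntegral_congr_fun measurableSet_Ioc fun y hy =>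
      Set.indicator_of_mem (hy.1 : y ∈ Set.Ioi (ε/2)) _
  show (∫ y in Set.Ioi (ε/2), φ y * f y) - (∫ y in (ε/2)..x, W y)
      = ∫ y in Set.Ioi x, φ y * f y
  rw [h1, split_tail (integrableOn_tail hφm hC hCne hf hε2) hεx]
  ring

end Minus

section MemL2
variable {φ : ℝ → ℂ} {C : ℝ≥0∞}

lemma sq_le_helper {a b K : ℝ≥0∞} (h : a ^ 2 ≤ K * b ^ 2) : a ≤ K ^ (1/2:ℝ) * b := by
  have h2 := ENNReal.rpow_le_rpow (x := a ^ 2) (y := K * b ^ 2)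
    (z := (1/2:ℝ)) h (by norm_num)
  calc a = (a ^ 2) ^ (1/2:ℝ) := by
        rw [← ENNReal.rpow_natCast a 2, ← ENNReal.rpow_mul]; norm_num
    _ ≤ (K * b ^ 2) ^ (1/2:ℝ) := h2
    _ = K ^ (1/2:ℝ) * b := by
        rw [ENNReal.mul_rpow_of_nonneg _ _ (by norm_num),
          ← ENNReal.rpow_natCast b 2, ← ENNReal.rpow_mul]
        norm_num

lemma memL2_plus
    (hφm : AEStronglyMeasurable φ (volume.restrict (Set.Ioi (0:ℝ))))
    (hC : ∀ x : ℝ, 0 < x →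
      ENNReal.ofReal x * ∫⁻ y in Set.Ioi x, (‖φ y‖₊ : ℝ≥0∞) ^ 2 ≤ C)
    (hCne : C ≠ ⊤) {f : ℝ → ℂ}
    (hf : MemLp f 2 (volume.restrict (Set.Ioi (0:ℝ)))) :
    MemLp (fun x => φ x * ∫ y in Set.Ioc (0:ℝ) x, f y) 2 (volume.restrict (Set.Ioi (0:ℝ)))
    ∧ eLpNorm (fun x => φ x * ∫ y in Set.Ioc (0:ℝ) x, f y) 2 (volume.restrict (Set.Ioi (0:ℝ)))
        ≤ (10 * C) ^ (1/2:ℝ) * eLpNorm f 2 (volume.restrict (Set.Ioi (0:ℝ))) := by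
  have haesm : AEStronglyMeasurable (fun x => φ x * ∫ y in Set.Ioc (0:ℝ) x, f y)
      (volume.restrict (Set.Ioi (0:ℝ))) :=
    hφm.mul (continuous_primitive_of_L2 hf).aestronglyMeasurable
  have hbound : eLpNorm (fun x => φ x * ∫ y in Set.Ioc (0:ℝ) x, f y) 2
      (volume.restrict (Set.Ioi (0:ℝ))) ^ 2
      ≤ 10 * C * eLpNorm f 2 (volume.restrict (Set.Ioi (0:ℝ))) ^ 2 := by
    rw [sq_eLpNorm_two, sq_eLpNorm_two]
    calc ∫⁻ x, (‖φ x * ∫ y in Set.Ioc (0:ℝ) x, f y‖₊ : ℝ≥0∞) ^ 2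
          ∂(volume.restrict (Set.Ioi (0:ℝ)))
        ≤ ∫⁻ x in Set.Ioi (0:ℝ),
            (‖φ x‖₊ : ℝ≥0∞) ^ 2 * (∫⁻ y in Set.Ioc (0:ℝ) x, (‖f y‖₊ : ℝ≥0∞)) ^ 2 := by
          refine lintegral_mono fun x => ?_
          rw [nnnorm_mul, ENNReal.coe_mul, mul_pow]
          refine mul_le_mul_right (pow_le_pow_left' ?_ 2) _
          exact enorm_integral_le_lintegral_enorm _
      _ ≤ 10 * C * ∫⁻ y in Set.Ioi (0:ℝ), (‖f y‖₊ : ℝ≥0∞) ^ 2 :=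
          hardy_plus hφm.aemeasurable hC hf.1.enorm
  constructor
  · rw [memℒp_two_iff']
    refine ⟨haesm, ?_⟩
    rw [← sq_eLpNorm_two]
    calc eLpNorm _ 2 _ ^ 2 ≤ 10 * C * eLpNorm f 2 _ ^ 2 := hbound
      _ < ⊤ := by
          refine ENNReal.mul_lt_top ?_ (ENNReal.pow_lt_top hf.2)
          exact ENNReal.mul_lt_top (by norm_num) (lt_top_iff_ne_top.2 hCne)
  · exact sq_le_helper hbound

lemma memL2_minus
    (hφm : AEStronglyMeasurable φ (volume.restrict (Set.Ioi (0:ℝ))))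
    (hC : ∀ x : ℝ, 0 < x →
      ENNReal.ofReal x * ∫⁻ y in Set.Ioi x, (‖φ y‖₊ : ℝ≥0∞) ^ 2 ≤ C)
    (hCne : C ≠ ⊤) {f : ℝ → ℂ}
    (hf : MemLp f 2 (volume.restrict (Set.Ioi (0:ℝ)))) :
    MemLp (fun x => ∫ y in Set.Ioi x, φ y * f y) 2 (volume.restrict (Set.Ioi (0:ℝ)))
    ∧ eLpNorm (fun x => ∫ y in Set.Ioi x, φ y * f y) 2 (volume.restrict (Set.Ioi (0:ℝ)))
        ≤ (10 * C) ^ (1/2:ℝ) * eLpNorm f 2 (volume.restrict (Set.Ioi (0:ℝ))) := by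
  have haesm := aesm_minus hφm hC hCne hf
  have hbound : eLpNorm (fun x => ∫ y in Set.Ioi x, φ y * f y) 2
      (volume.restrict (Set.Ioi (0:ℝ))) ^ 2
      ≤ 10 * C * eLpNorm f 2 (volume.restrict (Set.Ioi (0:ℝ))) ^ 2 := by
    rw [sq_eLpNorm_two, sq_eLpNorm_two]
    calc ∫⁻ x, (‖∫ y in Set.Ioi x, φ y * f y‖₊ : ℝ≥0∞) ^ 2
          ∂(volume.restrict (Set.Ioi (0:ℝ)))
        ≤ ∫⁻ x in Set.Ioi (0:ℝ),
            (∫⁻ y in Set.Ioi x, (‖φ y‖₊ : ℝ≥0∞) * (‖f y‖₊ : ℝ≥0∞)) ^ 2 := by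
          refine lintegral_mono fun x => ?_
          refine pow_le_pow_left' ?_ 2
          refine le_trans (enorm_integral_le_lintegral_enorm _) (le_of_eq ?_)
          refine lintegral_congr fun y => ?_
          show ((‖φ y * f y‖₊ : ℝ≥0) : ℝ≥0∞) = _
          rw [nnnorm_mul, ENNReal.coe_mul]
      _ ≤ 10 * C * ∫⁻ y in Set.Ioi (0:ℝ), (‖f y‖₊ : ℝ≥0∞) ^ 2 :=
          hardy_minus hφm.aemeasurable hC hCne hf.1.enorm
  constructor
  · rw [memℒp_two_iff']
    refine ⟨haesm, ?_⟩
    rw [← sq_eLpNorm_two]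
    calc eLpNorm _ 2 _ ^ 2 ≤ 10 * C * eLpNorm f 2 _ ^ 2 := hbound
      _ < ⊤ := by
          refine ENNReal.mul_lt_top ?_ (ENNReal.pow_lt_top hf.2)
          exact ENNReal.mul_lt_top (by norm_num) (lt_top_iff_ne_top.2 hCne)
  · exact sq_le_helper hbound

end MemL2

section Ops
variable {φ : ℝ → ℂ} {C : ℝ≥0∞}

lemma restrict_Ioc_left (x : ℝ) :
    (volume.restrict (Set.Ioi (0:ℝ))).restrict (Set.Ioc (0:ℝ) x)
      = volume.restrict (Set.Ioc (0:ℝ) x) := by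
  rw [Measure.restrict_restrict measurableSet_Ioc]
  congr 1
  exact Set.inter_eq_left.2 Set.Ioc_subset_Ioi_self

lemma hint_congr {u v : ℝ → ℂ} (huv : u =ᵐ[volume.restrict (Set.Ioi (0:ℝ))] v) (x : ℝ) :
    ∫ y in Set.Ioc (0:ℝ) x, u y = ∫ y in Set.Ioc (0:ℝ) x, v y := by
  apply integral_congr_ae
  rw [← restrict_Ioc_left x]
  exact ae_restrict_of_ae huv

lemma exists_Qplus
    (hφm : AEStronglyMeasurable φ (volume.restrict (Set.Ioi (0:ℝ))))
    (hC : ∀ x : ℝ, 0 < x →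
      ENNReal.ofReal x * ∫⁻ y in Set.Ioi x, (‖φ y‖₊ : ℝ≥0∞) ^ 2 ≤ C)
    (hCne : C ≠ ⊤) : ∃ T, IsQplus φ T := by
  have key := fun (g : Lp ℂ 2 (volume.restrict (Set.Ioi (0:ℝ)))) =>
    memL2_plus hφm hC hCne (Lp.memLp g)
  set P : Lp ℂ 2 (volume.restrict (Set.Ioi (0:ℝ)))
      → Lp ℂ 2 (volume.restrict (Set.Ioi (0:ℝ))) := fun g => (key g).1.toLp _ with hP_def
  have hadd : ∀ g h, P (g + h) = P g + P h := by
    intro g h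
    rw [hP_def]
    show _ = (key g).1.toLp _ + (key h).1.toLp _
    rw [← MemLp.toLp_add]
    apply MemLp.toLp_congr
    refine Filter.Eventually.of_forall fun x => ?_
    simp only [Pi.add_apply]
    rw [hint_congr (Lp.coeFn_add g h) x]
    simp only [Pi.add_apply]
    rw [integral_add (integrableOn_Ioc_of_memL2 (Lp.memLp g) x)
      (integrableOn_Ioc_of_memL2 (Lp.memLp h) x)]
    ring
  have hsmul : ∀ (c : ℂ) g, P (c • g) = c • P g := by
    intro c g
    rw [hP_def]
    show _ = c • (key g).1.toLp _
    rw [← MemLp.toLp_const_smul]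
    apply MemLp.toLp_congr
    refine Filter.Eventually.of_forall fun x => ?_
    simp only [Pi.smul_apply, smul_eq_mul]
    rw [hint_congr (Lp.coeFn_smul c g) x]
    simp only [Pi.smul_apply, smul_eq_mul]
    rw [integral_const_mul]
    ring
  set L : Lp ℂ 2 (volume.restrict (Set.Ioi (0:ℝ)))
      →ₗ[ℂ] Lp ℂ 2 (volume.restrict (Set.Ioi (0:ℝ))) :=
    { toFun := P, map_add' := hadd, map_smul' := hsmul } with hL_def
  have hboundP : ∀ g, ‖L g‖ ≤ ((10 * C) ^ (1/2:ℝ)).toReal * ‖g‖ := by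
    intro g
    show ‖(key g).1.toLp _‖ ≤ _
    rw [Lp.norm_toLp]
    calc ((eLpNorm _ 2 _).toReal)
        ≤ ((10 * C) ^ (1/2:ℝ) * eLpNorm (⇑g) 2 (volume.restrict (Set.Ioi (0:ℝ)))).toReal := by
          refine ENNReal.toReal_mono ?_ (key g).2
          exact ENNReal.mul_ne_top
            (ENNReal.rpow_ne_top_of_nonneg (by norm_num)
              (ENNReal.mul_ne_top (by norm_num) hCne))
            (Lp.eLpNorm_ne_top g)
      _ = ((10 * C) ^ (1/2:ℝ)).toReal * ‖g‖ := by
          rw [ENNReal.toReal_mul, Lp.norm_def]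
  refine ⟨L.mkContinuous _ hboundP, ?_⟩
  intro f hf _
  have h1 : ⇑(L.mkContinuous _ hboundP (hf.toLp f)) =ᵐ[volume.restrict (Set.Ioi (0:ℝ))]
      fun x => φ x * ∫ y in Set.Ioc (0:ℝ) x, (hf.toLp f : ℝ → ℂ) y :=
    MemLp.coeFn_toLp ((key (hf.toLp f)).1)
  refine h1.trans (Filter.Eventually.of_forall fun x => ?_)
  show φ x * ∫ y in Set.Ioc (0:ℝ) x, (hf.toLp f : ℝ → ℂ) y
      = φ x * ∫ y in Set.Ioc (0:ℝ) x, f y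
  rw [hint_congr (MemLp.coeFn_toLp hf) x]

lemma exists_Qminus
    (hφm : AEStronglyMeasurable φ (volume.restrict (Set.Ioi (0:ℝ))))
    (hC : ∀ x : ℝ, 0 < x →
      ENNReal.ofReal x * ∫⁻ y in Set.Ioi x, (‖φ y‖₊ : ℝ≥0∞) ^ 2 ≤ C)
    (hCne : C ≠ ⊤) : ∃ T, IsQminus φ T := by
  have key := fun (g : Lp ℂ 2 (volume.restrict (Set.Ioi (0:ℝ)))) =>
    memL2_minus hφm hC hCne (Lp.memLp g)
  set P : Lp ℂ 2 (volume.restrict (Set.Ioi (0:ℝ)))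
      → Lp ℂ 2 (volume.restrict (Set.Ioi (0:ℝ))) := fun g => (key g).1.toLp _ with hP_def
  have htail_congr : ∀ {u v : ℝ → ℂ},
      (u =ᵐ[volume.restrict (Set.Ioi (0:ℝ))] v) → ∀ x : ℝ, 0 < x →
      ∫ y in Set.Ioi x, φ y * u y = ∫ y in Set.Ioi x, φ y * v y := by
    intro u v huv x hx
    apply integral_congr_ae
    have h2 : u =ᵐ[volume.restrict (Set.Ioi x)] v := by
      rw [← restrict_tail_eq hx]
      exact ae_restrict_of_ae huv
    exact h2.mono fun y hy => by
      show φ y * u y = φ y * v y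
      rw [hy]
  have hadd : ∀ g h, P (g + h) = P g + P h := by
    intro g h
    rw [hP_def]
    show _ = (key g).1.toLp _ + (key h).1.toLp _
    rw [← MemLp.toLp_add]
    apply MemLp.toLp_congr
    refine (ae_restrict_mem measurableSet_Ioi).mono fun x hx => ?_
    simp only [Pi.add_apply]
    rw [htail_congr (Lp.coeFn_add g h) x hx]
    have : ∀ y : ℝ, φ y * (⇑g + ⇑h) y = φ y * g y + φ y * h y := by
      intro y; simp only [Pi.add_apply]; ring
    rw [integral_congr_ae (Filter.Eventually.of_forall this),
      integral_add ((integrableOn_tail hφm hC hCne (Lp.memLp g) hx))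
        ((integrableOn_tail hφm hC hCne (Lp.memLp h) hx))]
  have hsmul : ∀ (c : ℂ) g, P (c • g) = c • P g := by
    intro c g
    rw [hP_def]
    show _ = c • (key g).1.toLp _
    rw [← MemLp.toLp_const_smul]
    apply MemLp.toLp_congr
    refine (ae_restrict_mem measurableSet_Ioi).mono fun x hx => ?_
    show ∫ y in Set.Ioi x, φ y * (c • g : Lp ℂ 2 _) y = _
    rw [htail_congr (Lp.coeFn_smul c g) x hx]
    have : ∀ y : ℝ, φ y * (c • ⇑g) y = c * (φ y * g y) := by
      intro y; simp only [Pi.smul_apply, smul_eq_mul]; ring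
    rw [integral_congr_ae (Filter.Eventually.of_forall this), integral_const_mul]
    show _ = c • ∫ y in Set.Ioi x, φ y * g y
    rw [smul_eq_mul]
  set L : Lp ℂ 2 (volume.restrict (Set.Ioi (0:ℝ)))
      →ₗ[ℂ] Lp ℂ 2 (volume.restrict (Set.Ioi (0:ℝ))) :=
    { toFun := P, map_add' := hadd, map_smul' := hsmul } with hL_def
  have hboundP : ∀ g, ‖L g‖ ≤ ((10 * C) ^ (1/2:ℝ)).toReal * ‖g‖ := by
    intro g
    show ‖(key g).1.toLp _‖ ≤ _
    rw [Lp.norm_toLp]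
    calc ((eLpNorm _ 2 _).toReal)
        ≤ ((10 * C) ^ (1/2:ℝ) * eLpNorm (⇑g) 2 (volume.restrict (Set.Ioi (0:ℝ)))).toReal := by
          refine ENNReal.toReal_mono ?_ (key g).2
          exact ENNReal.mul_ne_top
            (ENNReal.rpow_ne_top_of_nonneg (by norm_num)
              (ENNReal.mul_ne_top (by norm_num) hCne))
            (Lp.eLpNorm_ne_top g)
      _ = ((10 * C) ^ (1/2:ℝ)).toReal * ‖g‖ := by
          rw [ENNReal.toReal_mul, Lp.norm_def]
  refine ⟨L.mkContinuous _ hboundP, ?_⟩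
  intro f hf _
  have h1 : ⇑(L.mkContinuous _ hboundP (hf.toLp f)) =ᵐ[volume.restrict (Set.Ioi (0:ℝ))]
      fun x => ∫ y in Set.Ioi x, φ y * (hf.toLp f : ℝ → ℂ) y :=
    MemLp.coeFn_toLp ((key (hf.toLp f)).1)
  refine h1.trans ((ae_restrict_mem measurableSet_Ioi).mono fun x hx => ?_)
  exact htail_congr (MemLp.coeFn_toLp hf) x hx

lemma exists_Q
    (hφm : AEStronglyMeasurable φ (volume.restrict (Set.Ioi (0:ℝ))))
    (hC : ∀ x : ℝ, 0 < x →
      ENNReal.ofReal x * ∫⁻ y in Set.Ioi x, (‖φ y‖₊ : ℝ≥0∞) ^ 2 ≤ C)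
    (hCne : C ≠ ⊤) : ∃ T, IsQ φ (Set.Ioi 0) T := by
  obtain ⟨Tp, hTp⟩ := exists_Qplus hφm hC hCne
  obtain ⟨Tm, hTm⟩ := exists_Qminus hφm hC hCne
  refine ⟨Tp + Tm, ?_⟩
  intro f hf htest
  have h1 := hTp f hf htest
  have h2 := hTm f hf htest
  have h3 : ⇑((Tp + Tm) (hf.toLp f)) =ᵐ[volume.restrict (Set.Ioi (0:ℝ))]
      ⇑(Tp (hf.toLp f)) + ⇑(Tm (hf.toLp f)) := by
    rw [ContinuousLinearMap.add_apply]
    exact Lp.coeFn_add _ _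
  refine h3.trans ?_
  have h4 := h1.add h2
  refine h4.trans ((ae_restrict_mem measurableSet_Ioi).mono fun x hx => ?_)
  show (φ x * ∫ y in Set.Ioc (0:ℝ) x, f y) + (∫ y in Set.Ioi x, φ y * f y)
      = ∫ y in Set.Ioi (0:ℝ), φ (max x y) * f y
  have hI1 : IntegrableOn (fun y => φ (max x y) * f y) (Set.Ioc (0:ℝ) x) volume := by
    refine IntegrableOn.congr_fun ((integrableOn_Ioc_of_memL2 hf x).const_mul (φ x))
      ?_ measurableSet_Ioc
    intro y hy
    show φ x * f y = φ (max x y) * f y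
    rw [max_eq_left hy.2]
  have hI2 : IntegrableOn (fun y => φ (max x y) * f y) (Set.Ioi x) volume := by
    refine IntegrableOn.congr_fun (integrableOn_tail hφm hC hCne hf hx)
      ?_ measurableSet_Ioi
    intro y hy
    show φ y * f y = φ (max x y) * f y
    rw [max_eq_right (le_of_lt hy)]
  rw [show Set.Ioi (0:ℝ) = Set.Ioc 0 x ∪ Set.Ioi x from (Set.Ioc_union_Ioi_eq_Ioi hx.le).symm,
    setIntegral_union Set.Ioc_disjoint_Ioi_same measurableSet_Ioi hI1 hI2]
  congr 1
  · rw [setIntegral_congr_fun measurableSet_Ioc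
      (fun y (hy : y ∈ Set.Ioc (0:ℝ) x) => by
        show φ (max x y) * f y = φ x * f y
        rw [max_eq_left hy.2] :
        Set.EqOn (fun y => φ (max x y) * f y) (fun y => φ x * f y) (Set.Ioc (0:ℝ) x)),
      integral_const_mul]
  · refine (setIntegral_congr_fun measurableSet_Ioi
      (fun y (hy : y ∈ Set.Ioi x) => ?_)).symm
    show φ (max x y) * f y = φ y * f y
    rw [max_eq_right (le_of_lt hy)]

end Ops

section Converse
variable {φ : ℝ → ℂ}

lemma testfun_ind {x : ℝ} (hx : 0 < x) :
    TestFun ((Set.Ioc (x/2) x).indicator (fun _ => (1:ℂ))) := by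
  constructor
  · refine ⟨1, fun y => ?_⟩
    by_cases hy : y ∈ Set.Ioc (x/2) x
    · rw [Set.indicator_of_mem hy]; simp
    · rw [Set.indicator_of_notMem hy]; simp
  · refine ⟨x/2, x, half_pos hx, fun y hy => ?_⟩
    exact Set.indicator_of_notMem (fun hmem => hy (Set.Ioc_subset_Icc_self hmem)) _

lemma memL2_ind (x : ℝ) :
    MemLp ((Set.Ioc (x/2) x).indicator (fun _ => (1:ℂ))) 2
      (volume.restrict (Set.Ioi (0:ℝ))) :=
  memLp_indicator_const 2 measurableSet_Ioc 1 (Or.inr (by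
    rw [Measure.restrict_apply measurableSet_Ioc]
    exact (lt_of_le_of_lt (measure_mono Set.inter_subset_left) measure_Ioc_lt_top).ne))

lemma sq_eLpNorm_ind {x : ℝ} (hx : 0 < x) :
    eLpNorm ((Set.Ioc (x/2) x).indicator (fun _ => (1:ℂ))) 2
      (volume.restrict (Set.Ioi (0:ℝ))) ^ 2 = ENNReal.ofReal (x/2) := by
  rw [eLpNorm_indicator_const measurableSet_Ioc two_ne_zero ENNReal.ofNat_ne_top]
  have hμs : (volume.restrict (Set.Ioi (0:ℝ))) (Set.Ioc (x/2) x) = ENNReal.ofReal (x/2) := by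
    rw [Measure.restrict_apply measurableSet_Ioc]
    have hss : Set.Ioc (x/2) x ∩ Set.Ioi 0 = Set.Ioc (x/2) x :=
      Set.inter_eq_left.2 (fun y hy => lt_trans (half_pos hx) hy.1)
    rw [hss, Real.volume_Ioc]
    congr 1
    ring
  rw [hμs, mul_pow, ENNReal.toReal_ofNat]
  rw [← ENNReal.rpow_natCast (ENNReal.ofReal (x/2) ^ (1/(2:ℝ))) 2, ← ENNReal.rpow_mul]
  norm_num

lemma tail_chain {T : Lp ℂ 2 (volume.restrict (Set.Ioi (0:ℝ))) →L[ℂ]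
      Lp ℂ 2 (volume.restrict (Set.Ioi (0:ℝ)))}
    {F : ℝ → ℂ} {x : ℝ} (hx : 0 < x)
    (hF : ⇑(T (MemLp.toLp _ (memL2_ind x))) =ᵐ[volume.restrict (Set.Ioi (0:ℝ))] F)
    (hFval : ∀ t ∈ Set.Ioi x, F t = (x/2 : ℝ) • φ t) :
    ENNReal.ofReal x * ∫⁻ y in Set.Ioi x, (‖φ y‖₊ : ℝ≥0∞) ^ 2
      ≤ 2 * (‖T‖₊ : ℝ≥0∞) ^ 2 := by
  set a : ℝ≥0∞ := ENNReal.ofReal (x/2) with ha_def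
  have ha0 : a ≠ 0 := by
    simp only [ha_def, ne_eq, ENNReal.ofReal_eq_zero, not_le]
    positivity
  have hat : a ≠ ⊤ := ENNReal.ofReal_ne_top
  have key : (a * ∫⁻ y in Set.Ioi x, (‖φ y‖₊ : ℝ≥0∞) ^ 2) * a
      ≤ ((‖T‖₊ : ℝ≥0∞) ^ 2) * a := by
    have step1 : a ^ 2 * ∫⁻ y in Set.Ioi x, (‖φ y‖₊ : ℝ≥0∞) ^ 2
        = ∫⁻ t in Set.Ioi x, (‖F t‖₊ : ℝ≥0∞) ^ 2 := by
      rw [← lintegral_const_mul' _ _ (by simp [ha_def] : a ^ 2 ≠ ⊤)]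
      refine (setLIntegral_congr_fun measurableSet_Ioi
        (fun t ht => ?_)).symm
      show ((‖F t‖₊ : ℝ≥0∞)) ^ 2 = a ^ 2 * (‖φ t‖₊ : ℝ≥0∞) ^ 2
      rw [hFval t ht, nnnorm_smul, ENNReal.coe_mul, mul_pow, ha_def,
        show ((‖x/2‖₊ : ℝ≥0) : ℝ≥0∞) = ‖x/2‖ₑ from rfl,
        Real.enorm_eq_ofReal (by positivity : (0:ℝ) ≤ x/2)]
    have step2 : ∫⁻ t in Set.Ioi x, (‖F t‖₊ : ℝ≥0∞) ^ 2
        ≤ eLpNorm F 2 (volume.restrict (Set.Ioi (0:ℝ))) ^ 2 := by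
      rw [sq_eLpNorm_two]
      exact lintegral_mono_set (fun t ht => lt_trans hx ht)
    have step3 : eLpNorm F 2 (volume.restrict (Set.Ioi (0:ℝ)))
        = (‖T (MemLp.toLp _ (memL2_ind x))‖₊ : ℝ≥0∞) := by
      rw [← eLpNorm_congr_ae hF, Lp.nnnorm_def,
        ENNReal.coe_toNNReal (Lp.eLpNorm_ne_top _)]
    have step4 : (‖T (MemLp.toLp _ (memL2_ind x))‖₊ : ℝ≥0∞) ^ 2
        ≤ ((‖T‖₊ : ℝ≥0∞)) ^ 2 * a := by
      calc (‖T (MemLp.toLp _ (memL2_ind x))‖₊ : ℝ≥0∞) ^ 2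
          ≤ ((‖T‖₊ * ‖MemLp.toLp _ (memL2_ind x)‖₊ : ℝ≥0)) ^ 2 := by
            refine pow_le_pow_left' ?_ 2
            exact_mod_cast ContinuousLinearMap.le_opNNNorm T _
        _ = ((‖T‖₊ : ℝ≥0∞)) ^ 2 * ((‖MemLp.toLp _ (memL2_ind x)‖₊ : ℝ≥0∞)) ^ 2 := by
            push_cast
            ring
        _ = ((‖T‖₊ : ℝ≥0∞)) ^ 2 * a := by
            rw [show ((‖MemLp.toLp _ (memL2_ind x)‖₊ : ℝ≥0) : ℝ≥0∞) = eLpNorm _ 2 _ from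
                Lp.enorm_toLp (memL2_ind x), sq_eLpNorm_ind hx]
    calc (a * ∫⁻ y in Set.Ioi x, (‖φ y‖₊ : ℝ≥0∞) ^ 2) * a
        = a ^ 2 * ∫⁻ y in Set.Ioi x, (‖φ y‖₊ : ℝ≥0∞) ^ 2 := by ring
      _ = ∫⁻ t in Set.Ioi x, (‖F t‖₊ : ℝ≥0∞) ^ 2 := step1
      _ ≤ eLpNorm F 2 (volume.restrict (Set.Ioi (0:ℝ))) ^ 2 := step2
      _ = (‖T (MemLp.toLp _ (memL2_ind x))‖₊ : ℝ≥0∞) ^ 2 := by rw [step3]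
      _ ≤ ((‖T‖₊ : ℝ≥0∞)) ^ 2 * a := step4
  have key2 : a * ∫⁻ y in Set.Ioi x, (‖φ y‖₊ : ℝ≥0∞) ^ 2 ≤ (‖T‖₊ : ℝ≥0∞) ^ 2 :=
    (ENNReal.mul_le_mul_iff_left ha0 hat).1 key
  have hx2 : ENNReal.ofReal x = 2 * a := by
    rw [ha_def, ← ENNReal.ofReal_ofNat, ← ENNReal.ofReal_mul (by norm_num)]
    congr 1
    ring
  rw [hx2, mul_assoc]
  exact mul_le_mul_right key2 2

lemma cond_of_Qplus {T} (hT : IsQplus φ T) :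
    ∀ x : ℝ, 0 < x →
    ENNReal.ofReal x * ∫⁻ y in Set.Ioi x, (‖φ y‖₊ : ℝ≥0∞) ^ 2
      ≤ 2 * (‖T‖₊ : ℝ≥0∞) ^ 2 := by
  intro x hx
  have hF := hT _ (memL2_ind x) (testfun_ind hx)
  refine tail_chain hx hF fun t ht => ?_
  show φ t * ∫ y in Set.Ioc (0:ℝ) t, (Set.Ioc (x/2) x).indicator (fun _ => (1:ℂ)) y = _
  have h1 : ∫ y in Set.Ioc (0:ℝ) t, (Set.Ioc (x/2) x).indicator (fun _ => (1:ℂ)) y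
      = ((x/2 : ℝ) : ℂ) := by
    rw [setIntegral_indicator measurableSet_Ioc]
    have h2 : Set.Ioc (0:ℝ) t ∩ Set.Ioc (x/2) x = Set.Ioc (x/2) x := by
      refine Set.inter_eq_right.2 fun y hy => ?_
      exact ⟨lt_trans (half_pos hx) hy.1, hy.2.trans (le_of_lt ht)⟩
    rw [h2, setIntegral_const, Real.volume_real_Ioc_of_le (by linarith : x/2 ≤ x),
      Complex.real_smul, mul_one]
    push_cast
    ring
  rw [h1, Complex.real_smul]
  ring

lemma cond_of_Q {T} (hT : IsQ φ (Set.Ioi 0) T) :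
    ∀ x : ℝ, 0 < x →
    ENNReal.ofReal x * ∫⁻ y in Set.Ioi x, (‖φ y‖₊ : ℝ≥0∞) ^ 2
      ≤ 2 * (‖T‖₊ : ℝ≥0∞) ^ 2 := by
  intro x hx
  have hF := hT _ (memL2_ind x) (testfun_ind hx)
  refine tail_chain hx hF fun t ht => ?_
  show ∫ y in Set.Ioi (0:ℝ),
      φ (max t y) * (Set.Ioc (x/2) x).indicator (fun _ => (1:ℂ)) y = _
  have h0 : ∀ y : ℝ, φ (max t y) * (Set.Ioc (x/2) x).indicator (fun _ => (1:ℂ)) y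
      = (Set.Ioc (x/2) x).indicator (fun y => φ (max t y)) y := by
    intro y
    by_cases hy : y ∈ Set.Ioc (x/2) x
    · rw [Set.indicator_of_mem hy, Set.indicator_of_mem hy, mul_one]
    · rw [Set.indicator_of_notMem hy, Set.indicator_of_notMem hy, mul_zero]
  rw [integral_congr_ae (Filter.Eventually.of_forall h0),
    setIntegral_indicator measurableSet_Ioc]
  have h2 : Set.Ioi (0:ℝ) ∩ Set.Ioc (x/2) x = Set.Ioc (x/2) x :=
    Set.inter_eq_right.2 fun y hy => lt_trans (half_pos hx) hy.1
  rw [h2]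
  rw [setIntegral_congr_fun measurableSet_Ioc
    (fun y (hy : y ∈ Set.Ioc (x/2) x) => by
      show φ (max t y) = φ t
      rw [max_eq_left (hy.2.trans (le_of_lt ht))] :
      Set.EqOn (fun y => φ (max t y)) (fun _ => φ t) (Set.Ioc (x/2) x))]
  rw [setIntegral_const, Real.volume_real_Ioc_of_le (by linarith : x/2 ≤ x)]
  congr 1
  ring_nf

end Converse

end QPhi

/-- Boundedness of `Q_φ`, of `Q_φ⁺`, and the condition `φ ∈ X_∞` are equivalent. -/
theorem stmt_0 (φ : ℝ → ℂ)
    (hφ : ∀ K : Set ℝ, IsCompact K → K ⊆ Set.Ioi 0 → MemLp φ 2 (volume.restrict K)) :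
    ((∃ T, IsQ φ (Set.Ioi 0) T) ↔ (∃ T, IsQplus φ T)) ∧
    ((∃ T, IsQ φ (Set.Ioi 0) T) ↔
      (∃ C : ℝ≥0∞, C < ⊤ ∧ ∀ x : ℝ, 0 < x →
        ENNReal.ofReal x * ∫⁻ y in Set.Ioi x, (‖φ y‖₊ : ℝ≥0∞) ^ 2 ≤ C)) := by
  have hφm := QPhi.aesm_phi hφ
  have hQ_to_cond : (∃ T, IsQ φ (Set.Ioi 0) T) →
      ∃ C : ℝ≥0∞, C < ⊤ ∧ ∀ x : ℝ, 0 < x →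
        ENNReal.ofReal x * ∫⁻ y in Set.Ioi x, (‖φ y‖₊ : ℝ≥0∞) ^ 2 ≤ C := by
    rintro ⟨T, hT⟩
    refine ⟨2 * (‖T‖₊ : ℝ≥0∞) ^ 2, ?_, QPhi.cond_of_Q hT⟩
    exact ENNReal.mul_lt_top (by norm_num) (ENNReal.pow_lt_top ENNReal.coe_lt_top)
  have hQp_to_cond : (∃ T, IsQplus φ T) →
      ∃ C : ℝ≥0∞, C < ⊤ ∧ ∀ x : ℝ, 0 < x →
        ENNReal.ofReal x * ∫⁻ y in Set.Ioi x, (‖φ y‖₊ : ℝ≥0∞) ^ 2 ≤ C := by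
    rintro ⟨T, hT⟩
    refine ⟨2 * (‖T‖₊ : ℝ≥0∞) ^ 2, ?_, QPhi.cond_of_Qplus hT⟩
    exact ENNReal.mul_lt_top (by norm_num) (ENNReal.pow_lt_top ENNReal.coe_lt_top)
  have hcond_to_Q : (∃ C : ℝ≥0∞, C < ⊤ ∧ ∀ x : ℝ, 0 < x →
      ENNReal.ofReal x * ∫⁻ y in Set.Ioi x, (‖φ y‖₊ : ℝ≥0∞) ^ 2 ≤ C) →
      ∃ T, IsQ φ (Set.Ioi 0) T := by
    rintro ⟨C, hC1, hC2⟩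
    exact QPhi.exists_Q hφm hC2 hC1.ne
  have hcond_to_Qp : (∃ C : ℝ≥0∞, C < ⊤ ∧ ∀ x : ℝ, 0 < x →
      ENNReal.ofReal x * ∫⁻ y in Set.Ioi x, (‖φ y‖₊ : ℝ≥0∞) ^ 2 ≤ C) →
      ∃ T, IsQplus φ T := by
    rintro ⟨C, hC1, hC2⟩
    exact QPhi.exists_Qplus hφm hC2 hC1.ne
  exact ⟨⟨fun h => hcond_to_Qp (hQ_to_cond h), fun h => hcond_to_Q (hQp_to_cond h)⟩,
    ⟨hQ_to_cond, hcond_to_Q⟩⟩
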